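/- For b ∈ ℝ^p the following are equivalent: (i) E[A · (Y − Xᵀb)] = 0 (the zero vector in ℝ^r); (ii) the law of the real random variable Y^v − (X^v)ᵀ b (the pushforward of ℙ) is the same for every deterministic vector v in the column space of M. -/

import Mathlib

open MeasureTheory ProbabilityTheory

/-- Shift invariance characterization (Rothenhäusler et al., Th. 3): the residual `Y - Xᵀ b` is
uncorrelated with the anchors `A` if and only if the law of `Y^v - (X^v)ᵀ b` is the same for
every deterministic shift `v` in the column space of `M`. -/
theorem anchor_regression_shift_invariance
    {Ω : Type*} [MeasureSpace Ω] [IsProbabilityMeasure (ℙ : Measure Ω)]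
    (p q r : ℕ) (hp : 1 ≤ p) (hq : 1 ≤ q) (hr : 1 ≤ r)
    (B : Matrix (Fin (p + 1 + q)) (Fin (p + 1 + q)) ℝ) (hB : IsUnit (1 - B))
    (M : Matrix (Fin (p + 1 + q)) (Fin r) ℝ)
    (A : Ω → Fin r → ℝ) (ε : Ω → Fin (p + 1 + q) → ℝ)
    (hAmeas : Measurable A) (hεmeas : Measurable ε)
    (hA2 : ∀ j, MemLp (fun ω => A ω j) 2 ℙ)
    (hε2 : ∀ i, MemLp (fun ω => ε ω i) 2 ℙ)
    (hAmean : ∀ j, ∫ ω, A ω j ∂ℙ = 0)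
    (hεmean : ∀ i, ∫ ω, ε ω i ∂ℙ = 0)
    (hIndep : IndepFun ε A ℙ)
    (hApd : (Matrix.of fun i j => ∫ ω, A ω i * A ω j ∂ℙ).PosDef)
    (b : Fin p → ℝ)
    -- residual `Y^v - (X^v)ᵀ b` of the shift-perturbed system `Z^v = (I-B)⁻¹ (ε + v)`
    (res : (Ω → Fin (p + 1 + q) → ℝ) → Ω → ℝ)
    (hres : ∀ v ω, res v ω =
      (1 - B)⁻¹.mulVec (ε ω + v ω) ⟨p, by omega⟩
        - ∑ i : Fin p, b i * (1 - B)⁻¹.mulVec (ε ω + v ω) (Fin.castLE (by omega) i)) :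
    (∀ j, ∫ ω, A ω j * res (fun ω' => M.mulVec (A ω')) ω ∂ℙ = 0)
      ↔ ∀ v₁ v₂ : Fin (p + 1 + q) → ℝ,
          (∃ d : Fin r → ℝ, v₁ = M.mulVec d) → (∃ d : Fin r → ℝ, v₂ = M.mulVec d) →
          Measure.map (res fun _ => v₁) ℙ = Measure.map (res fun _ => v₂) ℙ := by
  classical
  set a : Fin (p + 1 + q) → ℝ := fun k => (1 - B)⁻¹ ⟨p, by omega⟩ k
      - ∑ i : Fin p, b i * (1 - B)⁻¹ (Fin.castLE (by omega) i) k with ha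
  have hres2 : ∀ (v : Ω → Fin (p + 1 + q) → ℝ) (ω : Ω),
      res v ω = dotProduct a (ε ω) + dotProduct a (v ω) := by
    intro v ω
    rw [hres, ← dotProduct_add]
    simp only [ha, dotProduct, Matrix.mulVec, sub_mul, Finset.sum_sub_distrib,
      Finset.sum_mul, Finset.mul_sum, Pi.add_apply]
    rw [Finset.sum_comm]
    simp [mul_add, mul_assoc]
  set g : Ω → ℝ := fun ω => dotProduct a (ε ω) with hg
  set u : Fin r → ℝ := Matrix.vecMul a M with hu
  have hMv : ∀ d : Fin r → ℝ, dotProduct a (M.mulVec d) = dotProduct u d :=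
    fun d => Matrix.dotProduct_mulVec a M d
  have hgeq : g = fun ω => ∑ k, a k * ε ω k := rfl
  have hgmeas : Measurable g := by
    rw [hgeq]
    exact Finset.measurable_sum _ fun k _ => ((measurable_pi_apply k).comp hεmeas).const_mul (a k)
  have hg2 : MemLp g 2 ℙ := by
    rw [hgeq]
    exact memLp_finset_sum _ fun k _ => (hε2 k).const_mul (a k)
  have hint_mul : ∀ (f₁ f₂ : Ω → ℝ), MemLp f₁ 2 ℙ → MemLp f₂ 2 ℙ →
      Integrable (fun ω => f₁ ω * f₂ ω) ℙ := by
    intro f₁ f₂ h1 h2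
    have h3 : (1 : ENNReal) / 1 = 1 / 2 + 1 / 2 := by
      rw [ENNReal.div_add_div_same]
      norm_num
      exact (ENNReal.div_self (by norm_num) ENNReal.ofNat_ne_top).symm
    have := (MemLp.smul (r := 1) (φ := f₁) h2 h1).integrable le_rfl
    exact this.congr (Filter.Eventually.of_forall fun ω => by simp)
  have hAjmeas : ∀ j, Measurable (fun ω => A ω j) :=
    fun j => (measurable_pi_apply j).comp hAmeas
  have hEg0 : ∀ j, ∫ ω, A ω j * g ω ∂ℙ = 0 := by
    intro j
    have hfm : Measurable fun w : Fin (p + 1 + q) → ℝ => dotProduct a w :=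
      Finset.measurable_sum _ fun k _ => by fun_prop
    have hind : IndepFun (fun ω => A ω j) g ℙ :=
      (hIndep.symm.comp (measurable_pi_apply j) hfm)
    rw [hind.integral_fun_mul_eq_mul_integral (hAjmeas j).aestronglyMeasurable hgmeas.aestronglyMeasurable,
      hAmean j, zero_mul]
  have intAA : ∀ j k, Integrable (fun ω => A ω j * A ω k) ℙ :=
    fun j k => hint_mul _ _ (hA2 j) (hA2 k)
  have hGsum : ∀ j, ∫ ω, A ω j * res (fun ω' => M.mulVec (A ω')) ω ∂ℙ
      = ∑ k, u k * ∫ ω, A ω j * A ω k ∂ℙ := by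
    intro j
    have hre : (fun ω => A ω j * res (fun ω' => M.mulVec (A ω')) ω)
        = fun ω => A ω j * g ω + ∑ k, u k * (A ω j * A ω k) := by
      funext ω
      rw [hres2, hMv, mul_add]
      congr 1
      simp only [dotProduct, Finset.mul_sum]
      exact Finset.sum_congr rfl fun k _ => by ring
    rw [hre, integral_add (hint_mul _ _ (hA2 j) hg2)
      (integrable_finset_sum _ fun k _ => (intAA j k).const_mul (u k)),
      integral_finset_sum _ fun k _ => (intAA j k).const_mul (u k), hEg0 j, zero_add]
    exact Finset.sum_congr rfl fun k _ => integral_const_mul _ _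
  constructor
  · intro h v₁ v₂ ⟨d₁, h1⟩ ⟨d₂, h2⟩
    have hu0 : u = 0 := by
      by_contra hne
      have hpos := hApd.dotProduct_mulVec_pos hne
      have hzero : dotProduct (star u)
          (Matrix.mulVec ((Matrix.of fun i j => ∫ ω, A ω i * A ω j ∂ℙ) :
            Matrix (Fin r) (Fin r) ℝ) u) = 0 := by
        have hj : ∀ j, (∑ k, (∫ ω, A ω j * A ω k ∂ℙ) * u k) = 0 := by
          intro j
          have hh := h j
          rw [hGsum j] at hh
          rw [← hh]
          exact Finset.sum_congr rfl fun k _ => mul_comm _ _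
        simp only [dotProduct, Matrix.mulVec, Matrix.of_apply, star_trivial]
        refine Finset.sum_eq_zero fun j _ => ?_
        rw [hj j, mul_zero]
      rw [hzero] at hpos
      exact lt_irrefl _ hpos
    have : res (fun _ => v₁) = res (fun _ => v₂) := by
      funext ω
      rw [hres2, hres2, h1, h2, hMv, hMv, hu0, zero_dotProduct, zero_dotProduct]
    rw [this]
  · intro h j
    have hgint : Integrable g ℙ := hg2.integrable one_le_two
    have hud : ∀ d : Fin r → ℝ, dotProduct u d = 0 := by
      intro d
      have hmap := h (M.mulVec d) 0 ⟨d, rfl⟩ ⟨0, (M.mulVec_zero).symm⟩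
      have hfun1 : res (fun _ => M.mulVec d) = fun ω => g ω + dotProduct u d :=
        funext fun ω => by rw [hres2, hMv]
      have hfun2 : res (fun _ => (0 : Fin (p + 1 + q) → ℝ)) = g :=
        funext fun ω => by rw [hres2, dotProduct_zero, add_zero]
      rw [hfun1, hfun2] at hmap
      have h1 : ∫ x, x ∂(Measure.map (fun ω => g ω + dotProduct u d) ℙ)
          = ∫ ω, (g ω + dotProduct u d) ∂ℙ :=
        integral_map (hgmeas.add_const _).aemeasurable aestronglyMeasurable_id
      have h2 : ∫ x, x ∂(Measure.map g ℙ) = ∫ ω, g ω ∂ℙ :=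
        integral_map hgmeas.aemeasurable aestronglyMeasurable_id
      rw [hmap, h2, integral_add hgint (integrable_const _), integral_const,
        probReal_univ] at h1
      simp at h1
      linarith
    have hu0 : u = 0 := by
      funext k
      have := hud (Pi.single k 1)
      simpa [dotProduct, Pi.single_apply] using this
    rw [hGsum j]
    simp [hu0]
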